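/- Let t ≥ 1 be an integer, let T be a tree with t edges, and let G be a finite simple graph on n vertices with average degree d = 2|E(G)|/n. Then the number of (not necessarily injective) graph homomorphisms from T to G is at least n·d^t. -/

import Mathlib

set_option linter.unusedSectionVars false
set_option linter.unusedTactic false

/-- Number of (not necessarily injective) graph homomorphisms from `T` to `G`. -/
noncomputable def homCount {α β : Type} (T : SimpleGraph α) (G : SimpleGraph β) : ℕ :=
  Nat.card {f : α → β // ∀ ⦃u v : α⦄, T.Adj u v → G.Adj (f u) (f v)}

/-- Average degree `d = 2|E(G)|/n` of a finite graph. -/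
noncomputable def avgDeg {β : Type} [Fintype β] (G : SimpleGraph β) : ℝ :=
  2 * (Nat.card G.edgeSet) / (Fintype.card β)

open Finset

section core
open scoped Classical
variable {β : Type} [Fintype β]

/-- adjacency indicator -/
noncomputable def agx (G : SimpleGraph β) (x y : β) : ℝ := if G.Adj x y then 1 else 0

noncomputable def dgr (G : SimpleGraph β) (x : β) : ℝ := ∑ y, agx G x y

noncomputable def mm2 (G : SimpleGraph β) : ℝ := ∑ x, dgr G x

noncomputable def trns (G : SimpleGraph β) (x y : β) : ℝ := agx G x y / dgr G x

variable (G : SimpleGraph β)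

lemma agx_nonneg (x y : β) : 0 ≤ agx G x y := by unfold agx; positivity

lemma agx_symm (x y : β) : agx G x y = agx G y x := by
  unfold agx; rw [SimpleGraph.adj_comm]

lemma agx_eq_one_iff {x y : β} : agx G x y = 1 ↔ G.Adj x y := by
  unfold agx; split <;> simp_all

lemma agx_ne_zero_iff {x y : β} : agx G x y ≠ 0 ↔ G.Adj x y := by
  unfold agx; split <;> simp_all

lemma dgr_nonneg (x : β) : 0 ≤ dgr G x := Finset.sum_nonneg fun y _ => agx_nonneg G x y

lemma mm2_nonneg : 0 ≤ mm2 G := Finset.sum_nonneg fun x _ => dgr_nonneg G x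

lemma agx_eq_zero_of_dgr {x : β} (h : dgr G x = 0) (y : β) : agx G x y = 0 := by
  have := (Finset.sum_eq_zero_iff_of_nonneg (fun y _ => agx_nonneg G x y)).1 h
  exact this y (mem_univ y)

lemma dgr_pos_of_adj {x y : β} (h : G.Adj x y) : 0 < dgr G x := by
  rcases (dgr_nonneg G x).eq_or_lt with h0 | h0
  · exact absurd (agx_eq_zero_of_dgr G h0.symm y) ((agx_ne_zero_iff G).2 h)
  · exact h0

lemma trns_nonneg (x y : β) : 0 ≤ trns G x y := by
  unfold trns; exact div_nonneg (agx_nonneg G x y) (dgr_nonneg G x)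

lemma dgr_mul_trns (x y : β) : dgr G x * trns G x y = agx G x y := by
  unfold trns
  rcases eq_or_ne (dgr G x) 0 with h | h
  · rw [h, zero_mul, agx_eq_zero_of_dgr G h]
  · field_simp

lemma trns_adj_of_ne_zero {x y : β} (h : trns G x y ≠ 0) : G.Adj x y := by
  rw [← agx_ne_zero_iff G]
  intro h0; apply h; unfold trns; rw [h0, zero_div]

lemma trns_eq_of_adj {x y : β} (h : G.Adj x y) : trns G x y = 1 / dgr G x := by
  unfold trns; rw [(agx_eq_one_iff G).2 h]

lemma sum_trns_eq_one {x : β} (h : dgr G x ≠ 0) : ∑ y, trns G x y = 1 := by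
  unfold trns; rw [← Finset.sum_div]; exact div_self h

/-- the weight (probability) of a map under the random-walk generation -/
noncomputable def wgt (t : ℕ) (par : Fin t → Fin (t+1)) (ψ : Fin (t+1) → β) : ℝ :=
  (dgr G (ψ 0) / mm2 G) * ∏ i : Fin t, trns G (ψ (par i)) (ψ i.succ)

lemma wgt_nonneg (t : ℕ) (par : Fin t → Fin (t+1)) (ψ : Fin (t+1) → β) :
    0 ≤ wgt G t par ψ := by
  unfold wgt
  refine mul_nonneg (div_nonneg (dgr_nonneg _ _) (mm2_nonneg _)) ?_
  exact Finset.prod_nonneg fun i _ => trns_nonneg _ _ _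

lemma wgt_eq_zero_of_dgr {t : ℕ} {par : Fin t → Fin (t+1)} {ψ : Fin (t+1) → β}
    (j : Fin (t+1)) (hj : dgr G (ψ j) = 0) : wgt G t par ψ = 0 := by
  unfold wgt
  rcases Fin.eq_zero_or_eq_succ j with rfl | ⟨i, rfl⟩
  · rw [hj, zero_div, zero_mul]
  · rw [Finset.prod_eq_zero (mem_univ i), mul_zero]
    unfold trns
    rw [agx_symm, agx_eq_zero_of_dgr G hj, zero_div]

end core
section core2
open Finset
open scoped Classical
variable {β : Type} [Fintype β] (G : SimpleGraph β)

/-- restriction of a parent function to the first `t` edges -/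
def restr {t : ℕ} (par : Fin (t+1) → Fin (t+2)) (hpar : ∀ i, (par i : ℕ) ≤ i) :
    Fin t → Fin (t+1) :=
  fun i => ⟨(par i.castSucc : ℕ), by
    have h1 := hpar i.castSucc
    have h2 : (i.castSucc : ℕ) < t := i.isLt
    omega⟩

lemma restr_le {t : ℕ} (par : Fin (t+1) → Fin (t+2)) (hpar : ∀ i, (par i : ℕ) ≤ i)
    (i : Fin t) : ((restr par hpar i : Fin (t+1)) : ℕ) ≤ (i : ℕ) := hpar i.castSucc

/-- the parent of the last vertex, as an element of `Fin (t+1)` -/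
def lpar {t : ℕ} (par : Fin (t+1) → Fin (t+2)) (hpar : ∀ i, (par i : ℕ) ≤ i) :
    Fin (t+1) :=
  ⟨(par (Fin.last t) : ℕ), by have := hpar (Fin.last t); simpa using Nat.lt_succ_of_le this⟩

lemma wgt_snoc {t : ℕ} (par : Fin (t+1) → Fin (t+2)) (hpar : ∀ i, (par i : ℕ) ≤ i)
    (g : Fin (t+1) → β) (y : β) :
    wgt G (t+1) par (Fin.snoc g y) =
      wgt G t (restr par hpar) g * trns G (g (lpar par hpar)) y := by
  unfold wgt
  rw [Fin.prod_univ_castSucc]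
  have h0 : (Fin.snoc g y : Fin (t+2) → β) 0 = g 0 := by
    have : ((0 : Fin (t+2))) = Fin.castSucc (0 : Fin (t+1)) := rfl
    rw [this, Fin.snoc_castSucc]
  rw [h0]
  have hfac : ∀ i : Fin t,
      trns G ((Fin.snoc g y : Fin (t+2) → β) (par i.castSucc))
        ((Fin.snoc g y : Fin (t+2) → β) i.castSucc.succ)
      = trns G (g (restr par hpar i)) (g i.succ) := by
    intro i
    have h1 : par i.castSucc = Fin.castSucc (restr par hpar i) := by
      apply Fin.ext; rfl
    have h2 : (i.castSucc.succ : Fin (t+2)) = Fin.castSucc i.succ := by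
      apply Fin.ext; simp
    rw [h1, h2, Fin.snoc_castSucc, Fin.snoc_castSucc]
  have hlast :
      trns G ((Fin.snoc g y : Fin (t+2) → β) (par (Fin.last t)))
        ((Fin.snoc g y : Fin (t+2) → β) (Fin.last t).succ)
      = trns G (g (lpar par hpar)) y := by
    have h1 : par (Fin.last t) = Fin.castSucc (lpar par hpar) := by
      apply Fin.ext; rfl
    have h2 : ((Fin.last t).succ : Fin (t+2)) = Fin.last (t+1) := by
      apply Fin.ext; simp
    rw [h1, h2, Fin.snoc_castSucc, Fin.snoc_last]
  rw [hlast, Finset.prod_congr rfl (fun i _ => hfac i), mul_assoc]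

/-- splitting a sum over `Fin (t+2) → β` along the last coordinate -/
lemma sum_snoc {t : ℕ} (F : (Fin (t+2) → β) → ℝ) :
    ∑ ψ : Fin (t+2) → β, F ψ
      = ∑ g : Fin (t+1) → β, ∑ y : β, F (Fin.snoc g y) := by
  let e : ((Fin (t+1) → β) × β) ≃ (Fin (t+2) → β) :=
    { toFun := fun p => Fin.snoc p.1 p.2
      invFun := fun ψ => (fun i => ψ i.castSucc, ψ (Fin.last _))
      left_inv := by
        rintro ⟨g, y⟩
        refine Prod.ext ?_ ?_
        · funext i; simp [Fin.snoc_castSucc]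
        · simp [Fin.snoc_last]
      right_inv := by
        intro ψ
        funext i
        refine Fin.lastCases ?_ ?_ i
        · simp [Fin.snoc_last]
        · intro j; simp [Fin.snoc_castSucc] }
  calc ∑ ψ : Fin (t+2) → β, F ψ
      = ∑ p : (Fin (t+1) → β) × β, F (Fin.snoc p.1 p.2) :=
        (Fintype.sum_equiv e (fun p => F (Fin.snoc p.1 p.2)) F (fun p => rfl)).symm
    _ = ∑ g : Fin (t+1) → β, ∑ y : β, F (Fin.snoc g y) := Fintype.sum_prod_type _

end core2
section core3
open Finset
open scoped Classical
variable {β : Type} [Fintype β] (G : SimpleGraph β)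

lemma stationarity (h : β → ℝ) :
    ∑ x, (dgr G x / mm2 G) * ∑ y, trns G x y * h y
      = ∑ y, (dgr G y / mm2 G) * h y := by
  have key : ∀ x, (dgr G x / mm2 G) * ∑ y, trns G x y * h y
      = ∑ y, (agx G x y / mm2 G) * h y := by
    intro x
    rw [Finset.mul_sum]
    refine Finset.sum_congr rfl fun y _ => ?_
    have h1 : dgr G x / mm2 G * (trns G x y * h y)
        = (dgr G x * trns G x y) * h y / mm2 G := by ring
    rw [h1, dgr_mul_trns]
    ring
  rw [Finset.sum_congr rfl fun x _ => key x, Finset.sum_comm]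
  refine Finset.sum_congr rfl fun y _ => ?_
  have hsy : ∑ x, agx G x y = dgr G y := by
    rw [dgr]; exact Finset.sum_congr rfl fun x _ => agx_symm G x y
  rw [← Finset.sum_mul, ← Finset.sum_div, hsy]

/-- the marginal of each coordinate under the weight `wgt` is the degree-biased
distribution. -/
lemma marginal : ∀ (t : ℕ) (par : Fin t → Fin (t+1)),
    (∀ i, (par i : ℕ) ≤ i) → ∀ (h : β → ℝ) (v : Fin (t+1)),
    ∑ ψ : Fin (t+1) → β, wgt G t par ψ * h (ψ v)
      = ∑ x, (dgr G x / mm2 G) * h x := by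
  intro t
  induction t with
  | zero =>
    intro par hpar h v
    have hv : v = 0 := Fin.ext (by omega)
    subst hv
    refine Fintype.sum_equiv (Equiv.funUnique (Fin 1) β) _ (fun x => (dgr G x / mm2 G) * h x)
      (fun ψ => ?_)
    unfold wgt
    simp
  | succ t ih =>
    intro par hpar h v
    rw [sum_snoc]
    have hsp : ∀ (g : Fin (t+1) → β) (y : β),
        wgt G (t+1) par (Fin.snoc g y) * h ((Fin.snoc g y : Fin (t+2) → β) v)
        = wgt G t (restr par hpar) g * trns G (g (lpar par hpar)) y
            * h ((Fin.snoc g y : Fin (t+2) → β) v) := by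
      intro g y; rw [wgt_snoc G par hpar]
    rw [Finset.sum_congr rfl fun g _ => Finset.sum_congr rfl fun y _ => hsp g y]
    refine Fin.lastCases ?_ ?_ v
    · -- v = last: apply IH with h' x = ∑ y trns x y * h y, then stationarity
      have : ∀ (g : Fin (t+1) → β),
          ∑ y, wgt G t (restr par hpar) g * trns G (g (lpar par hpar)) y
              * h ((Fin.snoc g y : Fin (t+2) → β) (Fin.last (t+1)))
          = wgt G t (restr par hpar) g
              * ∑ y, trns G (g (lpar par hpar)) y * h y := by
        intro g
        rw [Finset.mul_sum]
        refine Finset.sum_congr rfl fun y _ => ?_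
        rw [Fin.snoc_last, mul_assoc]
      rw [Finset.sum_congr rfl fun g _ => this g,
        ih (restr par hpar) (restr_le par hpar) (fun x => ∑ y, trns G x y * h y) (lpar par hpar)]
      exact stationarity G h
    · -- v = castSucc v'
      intro v'
      have : ∀ (g : Fin (t+1) → β),
          ∑ y, wgt G t (restr par hpar) g * trns G (g (lpar par hpar)) y
              * h ((Fin.snoc g y : Fin (t+2) → β) v'.castSucc)
          = wgt G t (restr par hpar) g * h (g v') := by
        intro g
        have hsn : ∀ y : β, ((Fin.snoc g y : Fin (t+2) → β) v'.castSucc) = g v' :=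
          fun y => Fin.snoc_castSucc _ _ _
        rcases eq_or_ne (dgr G (g (lpar par hpar))) 0 with hz | hz
        · have hw : wgt G t (restr par hpar) g = 0 := wgt_eq_zero_of_dgr G _ hz
          simp [hw]
        · rw [Finset.sum_congr rfl fun y _ => by rw [hsn y]]
          rw [Finset.sum_congr rfl fun y _ =>
            (by ring : wgt G t (restr par hpar) g * trns G (g (lpar par hpar)) y * h (g v')
              = wgt G t (restr par hpar) g * h (g v') * trns G (g (lpar par hpar)) y),
            ← Finset.mul_sum, sum_trns_eq_one G hz, mul_one]
      rw [Finset.sum_congr rfl fun g _ => this g]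
      exact ih (restr par hpar) (restr_le par hpar) h v'

end core3
section core4
open Finset
open scoped Classical
variable {β : Type} [Fintype β] (G : SimpleGraph β)

lemma sum_wgt_eq_one (hm : mm2 G ≠ 0) (t : ℕ) (par : Fin t → Fin (t+1))
    (hpar : ∀ i, (par i : ℕ) ≤ i) :
    ∑ ψ : Fin (t+1) → β, wgt G t par ψ = 1 := by
  have h1 := marginal G t par hpar (fun _ => 1) 0
  simp only [mul_one] at h1
  rw [h1, ← Finset.sum_div]
  exact div_self hm

lemma P_of_wgt_ne_zero {t : ℕ} {par : Fin t → Fin (t+1)} {ψ : Fin (t+1) → β}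
    (h : wgt G t par ψ ≠ 0) : ∀ i : Fin t, G.Adj (ψ (par i)) (ψ i.succ) := by
  intro i
  unfold wgt at h
  have h2 : ∏ i : Fin t, trns G (ψ (par i)) (ψ i.succ) ≠ 0 := fun h0 => h (by rw [h0, mul_zero])
  exact trns_adj_of_ne_zero G ((Finset.prod_ne_zero_iff.1 h2) i (mem_univ i))

lemma wgt_pos_of_P {t : ℕ} (ht : 1 ≤ t) {par : Fin t → Fin (t+1)}
    (hpar : ∀ i, (par i : ℕ) ≤ i) (hm : 0 < mm2 G) {ψ : Fin (t+1) → β}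
    (hP : ∀ i : Fin t, G.Adj (ψ (par i)) (ψ i.succ)) : 0 < wgt G t par ψ := by
  have hdeg : ∀ i : Fin t, 0 < dgr G (ψ (par i)) :=
    fun i => dgr_pos_of_adj G (hP i)
  have h0 : 0 < dgr G (ψ 0) := by
    set i0 : Fin t := ⟨0, ht⟩ with hi0
    have hp0 : par i0 = 0 := Fin.ext (by
      have h1 := hpar i0
      have h2 : (i0 : ℕ) = 0 := rfl
      have h3 : ((0 : Fin (t+1)) : ℕ) = 0 := rfl
      omega)
    have := hdeg i0
    rwa [hp0] at this
  unfold wgt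
  refine mul_pos (div_pos h0 hm) (Finset.prod_pos fun i _ => ?_)
  rw [trns_eq_of_adj G (hP i)]
  exact div_pos one_pos (hdeg i)

/-- on the support, `log` of the weight is explicit -/
lemma log_wgt {t : ℕ} {par : Fin t → Fin (t+1)} {ψ : Fin (t+1) → β}
    (h : wgt G t par ψ ≠ 0) :
    Real.log (wgt G t par ψ)
      = Real.log (dgr G (ψ 0)) - Real.log (mm2 G)
        - ∑ i : Fin t, Real.log (dgr G (ψ (par i))) := by
  have hP := P_of_wgt_ne_zero G h
  have hdeg : ∀ i : Fin t, dgr G (ψ (par i)) ≠ 0 :=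
    fun i => (dgr_pos_of_adj G (hP i)).ne'
  have hw : wgt G t par ψ
      = (dgr G (ψ 0) / mm2 G) * ∏ i : Fin t, (dgr G (ψ (par i)))⁻¹ := by
    unfold wgt
    congr 1
    exact Finset.prod_congr rfl fun i _ => by
      rw [trns_eq_of_adj G (hP i), one_div]
  have hd0 : dgr G (ψ 0) / mm2 G ≠ 0 := by
    intro h0; apply h; rw [hw, h0, zero_mul]
  have hprod : (∏ i : Fin t, (dgr G (ψ (par i)))⁻¹) ≠ 0 := by
    rw [Finset.prod_ne_zero_iff]; exact fun i _ => inv_ne_zero (hdeg i)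
  have hm : mm2 G ≠ 0 := by
    intro h0
    apply h; unfold wgt; rw [h0, div_zero, zero_mul]
  rw [hw, Real.log_mul hd0 hprod, Real.log_div (by
      intro h0; apply hd0; rw [h0, zero_div]) hm,
    Real.log_prod (fun i _ => inv_ne_zero (hdeg i))]
  simp only [Real.log_inv]
  rw [Finset.sum_neg_distrib]
  ring

end core4
section core5
open Finset
open scoped Classical
variable {β : Type} [Fintype β] (G : SimpleGraph β)

/-- degree-biased Jensen: the degree-weighted mean of `log deg` is at least `log d`. -/
lemma jensen_deg (hm : 0 < mm2 G) :
    Real.log (mm2 G / (Fintype.card β : ℝ))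
      ≤ ∑ x, (dgr G x / mm2 G) * Real.log (dgr G x) := by
  set n : ℝ := (Fintype.card β : ℝ) with hn
  have hnpos : 0 < n := by
    rcases Nat.eq_zero_or_pos (Fintype.card β) with h | h
    · exfalso
      have : IsEmpty β := Fintype.card_eq_zero_iff.1 h
      have : mm2 G = 0 := by unfold mm2; simp
      linarith
    · rw [hn]; exact_mod_cast h
  set d : ℝ := mm2 G / n with hd
  have hdpos : 0 < d := div_pos hm hnpos
  have key : ∀ x : β, (dgr G x / mm2 G) * (Real.log d - Real.log (dgr G x))
      ≤ d / mm2 G - dgr G x / mm2 G := by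
    intro x
    rcases (dgr_nonneg G x).eq_or_lt with h0 | h0
    · rw [← h0]
      simp only [zero_div, zero_mul]
      have : 0 ≤ d / mm2 G := le_of_lt (div_pos hdpos hm)
      linarith
    · have hl : Real.log (d / dgr G x) ≤ d / dgr G x - 1 :=
        Real.log_le_sub_one_of_pos (div_pos hdpos h0)
      rw [Real.log_div hdpos.ne' h0.ne'] at hl
      have hmul := mul_le_mul_of_nonneg_left hl
        (le_of_lt (div_pos h0 hm))
      calc (dgr G x / mm2 G) * (Real.log d - Real.log (dgr G x))
          ≤ (dgr G x / mm2 G) * (d / dgr G x - 1) := hmul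
        _ = d / mm2 G - dgr G x / mm2 G := by field_simp
  have hsum := Finset.sum_le_sum (fun x (_ : x ∈ univ) => key x)
  have hsd : ∑ x : β, dgr G x = mm2 G := rfl
  have hrhs : ∑ x : β, (d / mm2 G - dgr G x / mm2 G) = 0 := by
    rw [Finset.sum_sub_distrib, Finset.sum_const, ← Finset.sum_div, hsd,
      div_self hm.ne', Finset.card_univ, nsmul_eq_mul, ← hn]
    have hnd : n * (d / mm2 G) = 1 := by
      rw [hd]
      field_simp
    rw [hnd]; ring
  rw [hrhs] at hsum
  have hexp : ∑ x : β, (dgr G x / mm2 G) * (Real.log d - Real.log (dgr G x))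
      = Real.log d - ∑ x, (dgr G x / mm2 G) * Real.log (dgr G x) := by
    rw [Finset.sum_congr rfl (fun x _ => mul_sub (dgr G x / mm2 G) _ _),
      Finset.sum_sub_distrib, ← Finset.sum_mul, ← Finset.sum_div, hsd,
      div_self hm.ne', one_mul]
  rw [hexp] at hsum
  linarith

/-- main bound in the concrete parent-function model -/
lemma concrete_bound (t : ℕ) (ht : 1 ≤ t) (par : Fin t → Fin (t+1))
    (hpar : ∀ i, (par i : ℕ) ≤ i) :
    (Fintype.card β : ℝ) * (mm2 G / (Fintype.card β : ℝ)) ^ t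
      ≤ ((univ.filter (fun ψ : Fin (t+1) → β =>
          ∀ i : Fin t, G.Adj (ψ (par i)) (ψ i.succ))).card : ℝ) := by
  set n : ℝ := (Fintype.card β : ℝ) with hn
  rcases (mm2_nonneg G).eq_or_lt with hm | hm
  · -- no edges: the left side is zero
    have : mm2 G / n = 0 ∨ n = 0 := by
      rcases eq_or_ne n 0 with h | h
      · exact Or.inr h
      · exact Or.inl (by rw [← hm, zero_div])
    rcases this with h | h
    · rw [h, zero_pow (by omega), mul_zero]; positivity
    · rw [h, zero_mul]; positivity
  · -- main case
    have hnpos : 0 < n := by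
      rcases Nat.eq_zero_or_pos (Fintype.card β) with h | h
      · exfalso
        have : IsEmpty β := Fintype.card_eq_zero_iff.1 h
        have : mm2 G = 0 := by unfold mm2; simp
        linarith
      · rw [hn]; exact_mod_cast h
    set d : ℝ := mm2 G / n with hd
    have hdpos : 0 < d := div_pos hm hnpos
    set S : Finset (Fin (t+1) → β) :=
      univ.filter (fun ψ => wgt G t par ψ ≠ 0) with hS
    have hSeq : S = univ.filter (fun ψ : Fin (t+1) → β =>
        ∀ i : Fin t, G.Adj (ψ (par i)) (ψ i.succ)) := by
      apply Finset.filter_congr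
      intro ψ _
      constructor
      · exact fun h => P_of_wgt_ne_zero G h
      · exact fun h => (wgt_pos_of_P G ht hpar hm h).ne'
    have hsum1 : ∑ ψ ∈ S, wgt G t par ψ = 1 := by
      rw [hS, Finset.sum_filter_ne_zero]
      exact sum_wgt_eq_one G hm.ne' t par hpar
    have hNpos : 0 < (S.card : ℝ) := by
      rcases Nat.eq_zero_or_pos S.card with h | h
      · exfalso
        rw [Finset.card_eq_zero] at h
        rw [h, Finset.sum_empty] at hsum1
        norm_num at hsum1
      · exact_mod_cast h
    set N : ℝ := (S.card : ℝ) with hN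
    -- the "entropy" functional
    set L : (Fin (t+1) → β) → ℝ := fun ψ =>
      Real.log (mm2 G) - Real.log (dgr G (ψ 0))
        + ∑ i : Fin t, Real.log (dgr G (ψ (par i))) with hL
    set J : ℝ := ∑ x, (dgr G x / mm2 G) * Real.log (dgr G x) with hJ
    -- value of the entropy
    have hE : ∑ ψ : Fin (t+1) → β, wgt G t par ψ * L ψ
        = Real.log (mm2 G) + ((t : ℝ) - 1) * J := by
      have hexp : ∀ ψ : Fin (t+1) → β, wgt G t par ψ * L ψ
          = wgt G t par ψ * Real.log (mm2 G)
            - wgt G t par ψ * Real.log (dgr G (ψ 0))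
            + ∑ i : Fin t, wgt G t par ψ * Real.log (dgr G (ψ (par i))) := by
        intro ψ
        simp only [hL]
        rw [mul_add, mul_sub, Finset.mul_sum]
      rw [Finset.sum_congr rfl fun ψ _ => hexp ψ]
      rw [Finset.sum_add_distrib, Finset.sum_sub_distrib]
      have h1 : ∑ ψ : Fin (t+1) → β, wgt G t par ψ * Real.log (mm2 G)
          = Real.log (mm2 G) := by
        rw [← Finset.sum_mul, sum_wgt_eq_one G hm.ne' t par hpar, one_mul]
      have h2 : ∑ ψ : Fin (t+1) → β, wgt G t par ψ * Real.log (dgr G (ψ 0)) = J :=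
        marginal G t par hpar (fun x => Real.log (dgr G x)) 0
      have h3 : ∑ ψ : Fin (t+1) → β, ∑ i : Fin t,
          wgt G t par ψ * Real.log (dgr G (ψ (par i))) = (t : ℝ) * J := by
        rw [Finset.sum_comm]
        have : ∀ i : Fin t, ∑ ψ : Fin (t+1) → β,
            wgt G t par ψ * Real.log (dgr G (ψ (par i))) = J :=
          fun i => marginal G t par hpar (fun x => Real.log (dgr G x)) (par i)
        rw [Finset.sum_congr rfl fun i _ => this i, Finset.sum_const]
        simp [nsmul_eq_mul]
      rw [h1, h2, h3]; ring
    -- Gibbs: entropy is at most log of the support size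
    have hGibbs : ∑ ψ : Fin (t+1) → β, wgt G t par ψ * L ψ ≤ Real.log N := by
      have hres : ∑ ψ : Fin (t+1) → β, wgt G t par ψ * L ψ
          = ∑ ψ ∈ S, wgt G t par ψ * L ψ := by
        rw [hS]
        exact (Finset.sum_filter_of_ne (fun ψ _ h => by
          intro h0; apply h; rw [h0, zero_mul])).symm
      rw [hres]
      have key : ∀ ψ ∈ S, wgt G t par ψ * L ψ
          ≤ wgt G t par ψ * Real.log N + (1 / N - wgt G t par ψ) := by
        intro ψ hψ
        have hne : wgt G t par ψ ≠ 0 := (Finset.mem_filter.1 hψ).2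
        have hwpos : 0 < wgt G t par ψ := (wgt_nonneg G t par ψ).lt_of_ne' hne
        have hLw : L ψ = - Real.log (wgt G t par ψ) := by
          rw [log_wgt G hne, hL]; ring
        have hlog : Real.log (1 / (N * wgt G t par ψ))
            ≤ 1 / (N * wgt G t par ψ) - 1 :=
          Real.log_le_sub_one_of_pos (by positivity)
        rw [one_div, Real.log_inv, Real.log_mul hNpos.ne' hne] at hlog
        have hmul := mul_le_mul_of_nonneg_left hlog hwpos.le
        have hcanc : wgt G t par ψ * (N * wgt G t par ψ)⁻¹ = 1 / N := by
          rw [mul_inv, one_div, mul_comm N⁻¹, ← mul_assoc, mul_inv_cancel₀ hne, one_mul]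
        rw [hLw]
        nlinarith [hmul, hcanc]
      calc ∑ ψ ∈ S, wgt G t par ψ * L ψ
          ≤ ∑ ψ ∈ S, (wgt G t par ψ * Real.log N + (1 / N - wgt G t par ψ)) :=
            Finset.sum_le_sum key
        _ = Real.log N := by
            rw [Finset.sum_add_distrib, ← Finset.sum_mul, hsum1, one_mul,
              Finset.sum_sub_distrib, hsum1, Finset.sum_const, nsmul_eq_mul]
            rw [← hN]
            field_simp
            ring
    -- Jensen bound
    have hJd : Real.log d ≤ J := by rw [hd, hJ]; exact jensen_deg G hm
    -- combine
    have hfinal : Real.log (n * d ^ t) ≤ Real.log N := by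
      have h1 : Real.log (n * d ^ t) = Real.log (mm2 G) + ((t : ℝ) - 1) * Real.log d := by
        rw [Real.log_mul hnpos.ne' (by positivity), Real.log_pow]
        have : mm2 G = n * d := by rw [hd]; field_simp
        rw [this, Real.log_mul hnpos.ne' hdpos.ne']
        push_cast
        ring
      have h2 : ((t : ℝ) - 1) * Real.log d ≤ ((t : ℝ) - 1) * J := by
        apply mul_le_mul_of_nonneg_left hJd
        have : (1 : ℝ) ≤ (t : ℝ) := by exact_mod_cast ht
        linarith
      calc Real.log (n * d ^ t)
          = Real.log (mm2 G) + ((t : ℝ) - 1) * Real.log d := h1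
        _ ≤ Real.log (mm2 G) + ((t : ℝ) - 1) * J := by linarith
        _ = ∑ ψ : Fin (t+1) → β, wgt G t par ψ * L ψ := hE.symm
        _ ≤ Real.log N := hGibbs
    have hlhs : (0 : ℝ) < n * d ^ t := by positivity
    have := Real.exp_le_exp.2 hfinal
    rw [Real.exp_log hlhs, Real.exp_log hNpos] at this
    rw [hN, hSeq] at this
    exact this
end core5
section order
open Finset
open scoped Classical
variable {α : Type} [Fintype α]

lemma exists_tree_order (T : SimpleGraph α) (hc : T.Connected) (t : ℕ)
    (hcard : Fintype.card α = t + 1) :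
    ∃ (v : Fin (t+1) ≃ α) (par : Fin t → Fin (t+1)),
      (∀ i, ((par i : Fin (t+1)) : ℕ) ≤ (i : ℕ)) ∧
      (∀ i : Fin t, T.Adj (v (par i)) (v i.succ)) := by
  have hne : Nonempty α := Fintype.card_pos_iff.1 (by omega)
  obtain ⟨r⟩ := hne
  set key : α → ℕ := fun a => T.dist r a with hkey
  set le : α → α → Bool := fun a b => decide (key a ≤ key b) with hle
  set l : List α := Finset.univ.toList.mergeSort le with hl
  have hperm : l.Perm Finset.univ.toList := List.mergeSort_perm _ _
  have hnodup : l.Nodup := hperm.nodup_iff.2 (Finset.nodup_toList _)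
  have hmem : ∀ a : α, a ∈ l := fun a =>
    hperm.mem_iff.2 (Finset.mem_toList.2 (mem_univ a))
  have hlen : l.length = t + 1 := by
    rw [hperm.length_eq, Finset.length_toList, Finset.card_univ, hcard]
  have hsorted : List.Pairwise (fun a b => le a b = true) l := by
    refine List.pairwise_mergeSort ?_ ?_ _
    · intro a b c hab hbc
      simp only [hle, decide_eq_true_eq] at *
      omega
    · intro a b
      simp only [hle, Bool.or_eq_true, decide_eq_true_eq]
      omega
  let e0 : Fin l.length ≃ α := hnodup.getEquivOfForallMemList l hmem
  set v : Fin (t+1) ≃ α := (finCongr hlen.symm).trans e0 with hv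
  have hmono : ∀ i j : Fin (t+1), (i : ℕ) < (j : ℕ) → key (v i) ≤ key (v j) := by
    intro i j hij
    have := List.pairwise_iff_get.1 hsorted
      ⟨(i : ℕ), by omega⟩ ⟨(j : ℕ), by omega⟩ hij
    simp only [hle, decide_eq_true_eq] at this
    exact this
  have hkr : key r = 0 := by simp [hkey]
  have hvr : v 0 = r := by
    set i0 := v.symm r with hi0
    have hri : v i0 = r := v.apply_symm_apply r
    rcases Nat.eq_zero_or_pos (i0 : ℕ) with h0 | h0
    · have hi00 : i0 = 0 := Fin.ext h0
      rw [← hri, hi00]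
    · have hle0 : key (v 0) ≤ key (v i0) := hmono 0 i0 (by
        have hz : ((0 : Fin (t+1)) : ℕ) = 0 := rfl
        omega)
      rw [hri, hkr] at hle0
      have hd0 : T.dist r (v 0) = 0 := by
        have : key (v 0) = 0 := by omega
        simpa [hkey] using this
      rcases SimpleGraph.dist_eq_zero_iff_eq_or_not_reachable.1 hd0 with h | h
      · exact h.symm
      · exact absurd (hc.preconnected r (v 0)) h
  -- each later vertex has an earlier neighbor
  have hfind : ∀ k : Fin t, ∃ j : Fin (t+1),
      (j : ℕ) ≤ (k : ℕ) ∧ T.Adj (v j) (v k.succ) := by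
    intro k
    set u : α := v k.succ with hu
    have hur : u ≠ r := by
      rw [hu, ← hvr]
      intro h
      exact Fin.succ_ne_zero k (v.injective h)
    have hdpos : 0 < key u := by
      rcases Nat.eq_zero_or_pos (key u) with h0 | h0
      · exfalso
        rcases SimpleGraph.dist_eq_zero_iff_eq_or_not_reachable.1 h0 with h | h
        · exact hur h.symm
        · exact h (hc.preconnected r u)
      · exact h0
    obtain ⟨p, hp⟩ := (hc.preconnected r u).exists_walk_length_eq_dist
    set q := p.reverse with hq
    have hqlen : q.length = key u := by
      rw [hq, SimpleGraph.Walk.length_reverse]; exact hp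
    have hnil : ¬ q.Nil := by
      rw [SimpleGraph.Walk.nil_iff_length_eq]
      omega
    set w : α := q.getVert 1 with hw
    have hadj : T.Adj u w := q.adj_snd hnil
    have htl : q.tail.length + 1 = q.length := SimpleGraph.Walk.length_tail_add_one hnil
    have hdw : key w ≤ q.tail.length := by
      have := SimpleGraph.dist_le q.tail.reverse
      rwa [SimpleGraph.Walk.length_reverse] at this
    have hkey_lt : key w < key u := by omega
    set j : Fin (t+1) := v.symm w with hj
    have hvj : v j = w := v.apply_symm_apply w
    refine ⟨j, ?_, ?_⟩
    · by_contra hcon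
      push_neg at hcon
      have hks : (k : ℕ) + 1 = ((k.succ : Fin (t+1)) : ℕ) := rfl
      rcases Nat.lt_or_ge ((k.succ : Fin (t+1)) : ℕ) (j : ℕ) with h | h
      · have := hmono k.succ j h
        rw [hvj, ← hu] at this
        omega
      · have hjeq : j = k.succ := Fin.ext (by omega)
        have hwu : w = u := by rw [← hvj, hjeq, hu]
        rw [hwu] at hkey_lt
        omega
    · rw [hvj]
      exact hadj.symm
  choose par hple hpadj using hfind
  exact ⟨v, par, hple, hpadj⟩

end order
section final
open Finset
open scoped Classical

lemma dgr_eq_degree {β : Type} [Fintype β] (G : SimpleGraph β) (x : β) :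
    dgr G x = (G.degree x : ℝ) := by
  unfold dgr agx
  rw [Finset.sum_boole]
  congr 1
  rw [SimpleGraph.degree, SimpleGraph.neighborFinset_eq_filter]

lemma mm2_eq {β : Type} [Fintype β] (G : SimpleGraph β) :
    mm2 G = 2 * (Nat.card G.edgeSet : ℝ) := by
  unfold mm2
  rw [Finset.sum_congr rfl (fun x _ => dgr_eq_degree G x), ← Nat.cast_sum,
    SimpleGraph.sum_degrees_eq_twice_card_edges, Nat.card_eq_fintype_card,
    ← SimpleGraph.edgeFinset_card]
  push_cast
  ring

lemma avgDeg_eq {β : Type} [Fintype β] (G : SimpleGraph β) :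
    avgDeg G = mm2 G / (Fintype.card β : ℝ) := by
  unfold avgDeg
  rw [mm2_eq]

lemma homCount_eq_filter {α β : Type} [Fintype α] [Fintype β]
    (T : SimpleGraph α) (G : SimpleGraph β) (hT : T.IsTree)
    (t : ℕ) (hcard : Fintype.card α = t + 1)
    (v : Fin (t+1) ≃ α) (par : Fin t → Fin (t+1))
    (hple : ∀ i, ((par i : Fin (t+1)) : ℕ) ≤ (i : ℕ))
    (hpadj : ∀ i : Fin t, T.Adj (v (par i)) (v i.succ)) :
    homCount T G = (univ.filter (fun ψ : Fin (t+1) → β =>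
      ∀ i : Fin t, G.Adj (ψ (par i)) (ψ i.succ))).card := by
  have hedge : T.edgeFinset.card = t := by
    have := hT.card_edgeFinset
    omega
  set eFun : Fin t → Sym2 α := fun i => s(v (par i), v i.succ) with heFun
  have hin : ∀ i, eFun i ∈ T.edgeFinset := fun i =>
    SimpleGraph.mem_edgeFinset.2 ((SimpleGraph.mem_edgeSet T).2 (hpadj i))
  have hinj : Function.Injective eFun := by
    intro i1 i2 h
    simp only [heFun, Sym2.eq_iff] at h
    rcases h with ⟨h1, h2⟩ | ⟨h1, h2⟩
    · have := v.injective h2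
      exact Fin.succ_injective _ this
    · exfalso
      have e1 : par i1 = i2.succ := v.injective h1
      have e2 : i1.succ = par i2 := v.injective h2
      have b1 := hple i1
      have b2 := hple i2
      have c1 : ((par i1 : Fin (t+1)) : ℕ) = (i2 : ℕ) + 1 := by rw [e1]; rfl
      have c2 : ((par i2 : Fin (t+1)) : ℕ) = (i1 : ℕ) + 1 := by rw [← e2]; rfl
      omega
  have himg : univ.image eFun = T.edgeFinset := by
    apply Finset.eq_of_subset_of_card_le
    · intro e he
      obtain ⟨i, _, rfl⟩ := Finset.mem_image.1 he
      exact hin i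
    · rw [Finset.card_image_of_injective _ hinj, Finset.card_univ, Fintype.card_fin, hedge]
  have hcover : ∀ a b : α, T.Adj a b → ∃ i, eFun i = s(a, b) := by
    intro a b hab
    have : s(a, b) ∈ univ.image eFun := by
      rw [himg]
      exact SimpleGraph.mem_edgeFinset.2 ((SimpleGraph.mem_edgeSet T).2 hab)
    obtain ⟨i, _, hi⟩ := Finset.mem_image.1 this
    exact ⟨i, hi⟩
  -- the equivalence between homomorphisms and constrained maps
  let E : {f : α → β // ∀ ⦃a b : α⦄, T.Adj a b → G.Adj (f a) (f b)} ≃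
      {ψ : Fin (t+1) → β // ∀ i : Fin t, G.Adj (ψ (par i)) (ψ i.succ)} :=
    { toFun := fun f => ⟨f.1 ∘ v, fun i => f.2 (hpadj i)⟩
      invFun := fun ψ => ⟨ψ.1 ∘ v.symm, by
        intro a b hab
        obtain ⟨i, hi⟩ := hcover a b hab
        simp only [heFun, Sym2.eq_iff] at hi
        rcases hi with ⟨h1, h2⟩ | ⟨h1, h2⟩
        · have ha : v.symm a = par i := by rw [← h1, Equiv.symm_apply_apply]
          have hb : v.symm b = i.succ := by rw [← h2, Equiv.symm_apply_apply]
          simpa [Function.comp, ha, hb] using ψ.2 i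
        · have ha : v.symm a = i.succ := by rw [← h2, Equiv.symm_apply_apply]
          have hb : v.symm b = par i := by rw [← h1, Equiv.symm_apply_apply]
          simpa [Function.comp, ha, hb] using (ψ.2 i).symm⟩
      left_inv := by
        intro f
        apply Subtype.ext
        funext a
        simp [Function.comp]
      right_inv := by
        intro ψ
        apply Subtype.ext
        funext i
        simp [Function.comp] }
  unfold homCount
  rw [Nat.card_congr E, Nat.card_eq_fintype_card, Fintype.card_subtype]

/-- Sidorenko's conjecture for trees: if `T` is a tree with `t` edges and `G` is an
`n`-vertex graph with average degree `d`, then `|Hom(T,G)| ≥ n·d^t`. -/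
theorem tree_hom_count_lower_bound (t : ℕ) (ht : 1 ≤ t)
    (α β : Type) [Fintype α] [Fintype β]
    (T : SimpleGraph α) (G : SimpleGraph β)
    (hT : T.IsTree) (hcard : Fintype.card α = t + 1) :
    (Fintype.card β : ℝ) * avgDeg G ^ t ≤ (homCount T G : ℝ) := by
  obtain ⟨v, par, hple, hpadj⟩ := exists_tree_order T hT.isConnected t hcard
  rw [homCount_eq_filter T G hT t hcard v par hple hpadj, avgDeg_eq]
  exact concrete_bound G t ht par hple

end final
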